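/- Let φ : ℝ → ℝ be a C³, 2π-periodic solution of φ̈ + |φ|^{1/2}φ = 0 with minimal period 2π, odd, φ(0) = 0, φ̇(0) > 0, satisfying φ(τ+π) = −φ(τ) and φ(τ) ≥ 0 on [0,π]. Define I(q) := −∫_{π−2q}^{π} φ̈(τ)φ̈(τ+2q)dτ for q ∈ [0,π/2]. Then there exists a unique q₀ ∈ (0,π/2) such that I(q₀) = (2/π)(φ̇(0))², and moreover I(q) < (2/π)(φ̇(0))² for all q ∈ [0,q₀) while I(q) > (2/π)(φ̇(0))² for all q ∈ (q₀,π/2]. -/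

import Mathlib

open Real intervalIntegral

/-! Auxiliary development for `critical_wavenumber`. -/

noncomputable def gfun (φ : ℝ → ℝ) : ℝ → ℝ := fun x => Real.sqrt |φ x| * φ x

noncomputable def gdfun (φ : ℝ → ℝ) : ℝ → ℝ := fun x => (3/2) * Real.sqrt |φ x| * deriv φ x

noncomputable def Jq (φ : ℝ → ℝ) : ℝ → ℝ :=
  fun q => ∫ s in (-q)..q, gfun φ (q + s) * gfun φ (q - s)

noncomputable def Fv : ℝ × ℝ → ℝ × ℝ := fun p => (p.2, -(Real.sqrt |p.1| * p.1))

lemma hasDerivAt_sqrtabs_mul (x : ℝ) :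
    HasDerivAt (fun y : ℝ => Real.sqrt |y| * y) ((3/2) * Real.sqrt |x|) x := by
  rcases lt_trichotomy x 0 with hx | rfl | hx
  · have hev : (fun y : ℝ => Real.sqrt (-y) * y) =ᶠ[nhds x] (fun y => Real.sqrt |y| * y) := by
      filter_upwards [Filter.Tendsto.eventually_lt_const hx (fun _ => id)] with y hy
      rw [abs_of_neg hy]
    have hs : HasDerivAt (fun y : ℝ => Real.sqrt (-y)) (1 / (2 * Real.sqrt (-x)) * (-1)) x := by
      have h0 : HasDerivAt Real.sqrt (1 / (2 * Real.sqrt (-x))) (-x) :=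
        Real.hasDerivAt_sqrt (by linarith)
      exact h0.comp x (hasDerivAt_neg x)
    have h1 : HasDerivAt (fun y : ℝ => Real.sqrt (-y) * y)
        ((1 / (2 * Real.sqrt (-x)) * (-1)) * x + Real.sqrt (-x) * 1) x := hs.mul (hasDerivAt_id x)
    have hsx : (0:ℝ) < Real.sqrt (-x) := Real.sqrt_pos.mpr (by linarith)
    have hval : (1 / (2 * Real.sqrt (-x)) * (-1)) * x + Real.sqrt (-x) * 1
        = (3/2) * Real.sqrt (-x) := by
      have h2 : Real.sqrt (-x) ^ 2 = -x := Real.sq_sqrt (by linarith)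
      field_simp
      nlinarith [h2]
    rw [abs_of_neg hx]
    rw [hval] at h1
    exact h1.congr_of_eventuallyEq hev.symm
  · have : HasDerivAt (fun y : ℝ => Real.sqrt |y| * y) 0 0 := by
      rw [hasDerivAt_iff_isLittleO]
      simp only [sub_zero, abs_zero, Real.sqrt_zero, mul_zero, zero_mul, sub_zero, smul_eq_mul]
      rw [Asymptotics.isLittleO_iff]
      intro ε hε
      have : ∀ᶠ y : ℝ in nhds 0, |y| < ε ^ 2 := by
        have := Metric.ball_mem_nhds (0:ℝ) (by positivity : (0:ℝ) < ε ^ 2)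
        filter_upwards [this] with y hy
        simpa [Real.dist_eq] using hy
      filter_upwards [this] with y hy
      have h1 : Real.sqrt |y| ≤ ε := by
        rw [show ε = Real.sqrt (ε ^ 2) by rw [Real.sqrt_sq hε.le]]
        exact Real.sqrt_le_sqrt hy.le
      have h2 : ‖Real.sqrt |y| * y‖ = Real.sqrt |y| * ‖y‖ := by
        rw [norm_mul, Real.norm_of_nonneg (Real.sqrt_nonneg _)]
      rw [h2]
      exact mul_le_mul_of_nonneg_right h1 (norm_nonneg _)
    simpa using this
  · have hev : (fun y : ℝ => Real.sqrt y * y) =ᶠ[nhds x] (fun y => Real.sqrt |y| * y) := by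
      filter_upwards [Filter.Tendsto.eventually_const_lt hx (fun _ => id)] with y hy
      rw [abs_of_pos hy]
    have h1 : HasDerivAt (fun y : ℝ => Real.sqrt y * y) ((3/2) * Real.sqrt x) x := by
      have hs : HasDerivAt Real.sqrt (1 / (2 * Real.sqrt x)) x := Real.hasDerivAt_sqrt hx.ne'
      have := hs.mul (hasDerivAt_id x)
      refine this.congr_deriv ?_
      have hsx : (0:ℝ) < Real.sqrt x := Real.sqrt_pos.mpr hx
      have h2 : Real.sqrt x ^ 2 = x := Real.sq_sqrt hx.le
      rw [id_eq]
      field_simp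
      nlinarith [h2]
    rw [abs_of_pos hx]
    exact h1.congr_of_eventuallyEq hev.symm

lemma contDiff_sqrtabs_mul : ContDiff ℝ 1 (fun y : ℝ => Real.sqrt |y| * y) := by
  rw [contDiff_one_iff_deriv]
  constructor
  · exact fun x => (hasDerivAt_sqrtabs_mul x).differentiableAt
  · have : (deriv fun y : ℝ => Real.sqrt |y| * y) = fun y => (3/2) * Real.sqrt |y| := by
      funext y; exact (hasDerivAt_sqrtabs_mul y).deriv
    rw [this]
    exact continuous_const.mul (Real.continuous_sqrt.comp continuous_abs)

lemma contDiff_Fv : ContDiff ℝ 1 Fv :=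
  contDiff_snd.prodMk ((contDiff_sqrtabs_mul.comp contDiff_fst).neg)

lemma exists_lipschitzOnWith_Fv (R : ℝ) :
    ∃ K : NNReal, LipschitzOnWith K Fv (Metric.closedBall (0 : ℝ × ℝ) R) := by
  have hcont : Continuous fun p => fderiv ℝ Fv p := contDiff_Fv.continuous_fderiv one_ne_zero
  obtain ⟨C, hC⟩ := (isCompact_closedBall (0 : ℝ × ℝ) R).exists_bound_of_continuousOn
    (hcont.continuousOn (s := Metric.closedBall 0 R))
  refine ⟨C.toNNReal, ?_⟩
  apply Convex.lipschitzOnWith_of_nnnorm_fderiv_le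
    (fun x _ => contDiff_Fv.differentiable one_ne_zero x) ?_ (convex_closedBall _ _)
  intro x hx
  rw [← norm_toNNReal]
  exact Real.toNNReal_mono (hC x hx)

lemma sol_eq {x y : ℝ → ℝ × ℝ} {R : ℝ}
    (hx : ∀ t, HasDerivAt x (Fv (x t)) t) (hy : ∀ t, HasDerivAt y (Fv (y t)) t)
    (hxb : ∀ t, x t ∈ Metric.closedBall (0 : ℝ × ℝ) R)
    (hyb : ∀ t, y t ∈ Metric.closedBall (0 : ℝ × ℝ) R)
    (t₀ : ℝ) (h : x t₀ = y t₀) : ∀ t, x t = y t := by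
  obtain ⟨K, hK⟩ := exists_lipschitzOnWith_Fv R
  intro t
  have hxc : Continuous x := by
    apply continuous_iff_continuousAt.mpr
    exact fun s => (hx s).differentiableAt.continuousAt
  have hyc : Continuous y := by
    apply continuous_iff_continuousAt.mpr
    exact fun s => (hy s).differentiableAt.continuousAt
  have key := ODE_solution_unique_of_mem_Icc
    (v := fun _ p => Fv p) (s := fun _ => Metric.closedBall (0 : ℝ × ℝ) R)
    (K := K) (f := x) (g := y) (t₀ := t₀) (a := min t t₀ - 1) (b := max t t₀ + 1)
    (fun _ _ => hK)
    ⟨by have := min_le_right t t₀; linarith,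
     by have := le_max_right t t₀; linarith⟩
    hxc.continuousOn (fun s _ => hx s) (fun s _ => hxb s)
    hyc.continuousOn (fun s _ => hy s) (fun s _ => hyb s) h
  exact key ⟨by linarith [min_le_left t t₀], by linarith [le_max_left t t₀]⟩

section phi

variable (φ : ℝ → ℝ) (hφ : ContDiff ℝ 3 φ)
    (hper : Function.Periodic φ (2 * π))
    (hmin : ∀ p, 0 < p → Function.Periodic φ p → 2 * π ≤ p)
    (hode : ∀ τ, deriv (deriv φ) τ + |φ τ| ^ ((1:ℝ)/2) * φ τ = 0)
    (hodd : ∀ τ, φ (-τ) = -φ τ)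
    (h0 : φ 0 = 0) (h0' : 0 < deriv φ 0)
    (hanti : ∀ τ, φ (τ + π) = -φ τ)
    (hpos : ∀ τ ∈ Set.Icc (0:ℝ) π, 0 ≤ φ τ)

set_option linter.unusedSectionVars false
set_option linter.unusedVariables false

include hφ hper hmin hode hodd h0 h0' hanti hpos

lemma hd1x : ∀ t, HasDerivAt φ (deriv φ t) t :=
  fun t => ((hφ.differentiable (by norm_num)) t).hasDerivAt

lemma hCD2x : ContDiff ℝ 2 (deriv φ) := by
  have h3 : ContDiff ℝ ((2:ℕ) + 1) φ := by exact_mod_cast hφ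
  exact (contDiff_succ_iff_deriv.mp h3).2.2

lemma hd2x : ∀ t, HasDerivAt (deriv φ) (deriv (deriv φ) t) t :=
  fun t => (((hCD2x φ hφ hper hmin hode hodd h0 h0' hanti hpos).differentiable
    (by norm_num)) t).hasDerivAt

lemma hcont2x : Continuous (deriv (deriv φ)) := by
  have h2 : ContDiff ℝ ((1:ℕ) + 1) (deriv φ) := by
    exact_mod_cast hCD2x φ hφ hper hmin hode hodd h0 h0' hanti hpos
  exact ((contDiff_succ_iff_deriv.mp h2).2.2.differentiable (by norm_num)).continuous

lemma phisymx : ∀ s, φ (π - s) = φ s := by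
  intro s
  have h1 := hanti (-s)
  rw [show -s + π = π - s by ring] at h1
  rw [h1, hodd s, neg_neg]

lemma hode'x : ∀ τ, deriv (deriv φ) τ = -(gfun φ τ) := by
  intro τ
  have h1 := hode τ
  rw [← Real.sqrt_eq_rpow] at h1
  unfold gfun
  linarith

lemma gcontx : Continuous (gfun φ) :=
  (Real.continuous_sqrt.comp (continuous_abs.comp hφ.continuous)).mul hφ.continuous

lemma traj_solx : ∀ t, HasDerivAt (fun t => (φ t, deriv φ t)) (Fv (φ t, deriv φ t)) t := by
  intro t
  have h := (hd1x φ hφ hper hmin hode hodd h0 h0' hanti hpos t).prodMk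
    (hd2x φ hφ hper hmin hode hodd h0 h0' hanti hpos t)
  have he : deriv (deriv φ) t = -(Real.sqrt |φ t| * φ t) :=
    hode'x φ hφ hper hmin hode hodd h0 h0' hanti hpos t
  simpa [Fv, he] using h

lemma traj_boundx : ∃ R : ℝ, (∀ t, ‖(φ t, deriv φ t)‖ ≤ R) := by
  have hc : Continuous fun t => (φ t, deriv φ t) :=
    (hφ.continuous).prodMk ((hCD2x φ hφ hper hmin hode hodd h0 h0' hanti hpos).continuous)
  obtain ⟨C, hC⟩ := (isCompact_Icc (a := (0:ℝ)) (b := 2*π)).exists_bound_of_continuousOn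
    hc.continuousOn
  have hperd : Function.Periodic (deriv φ) (2 * π) := by
    intro t
    have : (fun t => φ (t + 2*π)) = φ := funext fun t => hper t
    calc deriv φ (t + 2*π) = deriv (fun t => φ (t + 2*π)) t := (deriv_comp_add_const φ _ t).symm
    _ = deriv φ t := by rw [this]
  have hx : Function.Periodic (fun t => (φ t, deriv φ t)) (2*π) := fun t => by
    simp [hper t, hperd t]
  refine ⟨C, fun t => ?_⟩
  obtain ⟨s, hs, heq⟩ := hx.exists_mem_Ico₀ (by positivity) t
  rw [heq]
  exact hC s ⟨hs.1, hs.2.le⟩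

lemma no_critx : ∀ c ∈ Set.Ioo 0 (π/2), deriv φ c ≠ 0 := by
  rintro c ⟨hc0, hc2⟩ hcrit
  obtain ⟨R, hR⟩ := traj_boundx φ hφ hper hmin hode hodd h0 h0' hanti hpos
  set x : ℝ → ℝ × ℝ := fun t => (φ t, deriv φ t) with hxdef
  set y : ℝ → ℝ × ℝ := fun t => (φ (2*c - t), -deriv φ (2*c - t)) with hydef
  have hysol : ∀ t, HasDerivAt y (Fv (y t)) t := by
    intro t
    have hin : HasDerivAt (fun t : ℝ => 2*c - t) (-1) t := by
      simpa using (hasDerivAt_id' t).const_sub (2*c)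
    have h1 : HasDerivAt (fun t => φ (2*c - t)) (deriv φ (2*c - t) * (-1)) t :=
      (hd1x φ hφ hper hmin hode hodd h0 h0' hanti hpos (2*c - t)).comp t hin
    have h2 : HasDerivAt (fun t => -deriv φ (2*c - t))
        (-(deriv (deriv φ) (2*c - t) * (-1))) t :=
      ((hd2x φ hφ hper hmin hode hodd h0 h0' hanti hpos (2*c - t)).comp t hin).neg
    have h := h1.prodMk h2
    have hval : (deriv φ (2*c - t) * (-1), -(deriv (deriv φ) (2*c - t) * (-1))) = Fv (y t) := by
      rw [hydef]
      show _ = (-deriv φ (2*c - t), -(Real.sqrt |φ (2*c - t)| * φ (2*c - t)))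
      have he : deriv (deriv φ) (2*c - t) = -(Real.sqrt |φ (2*c - t)| * φ (2*c - t)) :=
        hode'x φ hφ hper hmin hode hodd h0 h0' hanti hpos (2*c - t)
      rw [← he]
      rw [Prod.mk.injEq]
      constructor <;> ring
    rw [hval] at h
    exact h
  have hxb : ∀ t, x t ∈ Metric.closedBall (0 : ℝ × ℝ) R := by
    intro t; rw [Metric.mem_closedBall, dist_zero_right]; exact hR t
  have hyb : ∀ t, y t ∈ Metric.closedBall (0 : ℝ × ℝ) R := by
    intro t; rw [Metric.mem_closedBall, dist_zero_right]
    have : ‖y t‖ = ‖x (2*c - t)‖ := by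
      simp [hxdef, hydef, Prod.norm_def]
    rw [this]; exact hR _
  have heqc : x c = y c := by
    simp [hxdef, hydef, show 2*c - c = c by ring, hcrit]
  have hall := sol_eq (traj_solx φ hφ hper hmin hode hodd h0 h0' hanti hpos) hysol hxb hyb c heqc
  have hrefl : ∀ t, φ (2*c - t) = φ t := by
    intro t
    have := hall t
    exact (congrArg Prod.fst this).symm
  have hperiod : Function.Periodic φ (π - 2*c) := by
    intro t
    calc φ (t + (π - 2*c)) = φ (π - (2*c - t)) := by ring_nf
    _ = φ (2*c - t) := phisymx φ hφ hper hmin hode hodd h0 h0' hanti hpos _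
    _ = φ t := hrefl t
  have := hmin (π - 2*c) (by linarith) hperiod
  have hπ : 0 < π := pi_pos
  linarith

lemma dphi_posx : ∀ τ ∈ Set.Ico (0:ℝ) (π/2), 0 < deriv φ τ := by
  rintro τ ⟨hτ0, hτ2⟩
  by_contra hle
  push_neg at hle
  have hτ0' : 0 < τ := by
    rcases eq_or_lt_of_le hτ0 with h | h
    · exfalso; rw [← h] at hle; linarith
    · exact h
  have hcont : ContinuousOn (deriv φ) (Set.Icc 0 τ) :=
    (hCD2x φ hφ hper hmin hode hodd h0 h0' hanti hpos).continuous.continuousOn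
  have hIVT := intermediate_value_Icc' hτ0 hcont
  have h0mem : (0:ℝ) ∈ Set.Icc (deriv φ τ) (deriv φ 0) := ⟨hle, h0'.le⟩
  obtain ⟨c, hc, hceq⟩ := hIVT h0mem
  have hcne : c ≠ 0 := by
    intro h; rw [h] at hceq; linarith
  exact no_critx φ hφ hper hmin hode hodd h0 h0' hanti hpos c
    ⟨lt_of_le_of_ne hc.1 (Ne.symm hcne), lt_of_le_of_lt hc.2 hτ2⟩ hceq

lemma dphi_symx : ∀ s, deriv φ (π - s) = -deriv φ s := by
  intro s
  have hfe : (fun s => φ (π - s)) = φ :=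
    funext (phisymx φ hφ hper hmin hode hodd h0 h0' hanti hpos)
  have : deriv (fun s => φ (π - s)) s = deriv φ s := by rw [hfe]
  rw [deriv_comp_const_sub] at this
  linarith

lemma dphi_antix : ∀ τ, deriv φ (τ + π) = -deriv φ τ := by
  intro τ
  have hfe : (fun τ => φ (τ + π)) = fun τ => -φ τ := funext hanti
  calc deriv φ (τ + π) = deriv (fun τ => φ (τ + π)) τ := (deriv_comp_add_const φ π τ).symm
  _ = deriv (fun τ => -φ τ) τ := by rw [hfe]
  _ = -deriv φ τ := deriv.neg

lemma dphi_halfx : deriv φ (π/2) = 0 := by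
  have := dphi_symx φ hφ hper hmin hode hodd h0 h0' hanti hpos (π/2)
  rw [show π - π/2 = π/2 by ring] at this
  linarith

lemma dphi_nonnegx : ∀ τ ∈ Set.Icc (0:ℝ) (π/2), 0 ≤ deriv φ τ := by
  rintro τ ⟨h1, h2⟩
  rcases eq_or_lt_of_le h2 with h | h
  · rw [h, dphi_halfx φ hφ hper hmin hode hodd h0 h0' hanti hpos]
  · exact (dphi_posx φ hφ hper hmin hode hodd h0 h0' hanti hpos τ ⟨h1, h⟩).le

lemma phi_strictmonox : StrictMonoOn φ (Set.Icc (0:ℝ) (π/2)) := by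
  apply strictMonoOn_of_deriv_pos (convex_Icc _ _) hφ.continuous.continuousOn
  intro x hx
  rw [interior_Icc] at hx
  exact dphi_posx φ hφ hper hmin hode hodd h0 h0' hanti hpos x ⟨hx.1.le, hx.2⟩

lemma phi_posx : ∀ τ ∈ Set.Ioo (0:ℝ) π, 0 < φ τ := by
  have hπ := pi_pos
  have base : ∀ τ ∈ Set.Ioo (0:ℝ) (π/2), 0 < φ τ := by
    rintro τ ⟨h1, h2⟩
    have := phi_strictmonox φ hφ hper hmin hode hodd h0 h0' hanti hpos
      (Set.mem_Icc.mpr ⟨le_refl 0, by linarith⟩) (Set.mem_Icc.mpr ⟨h1.le, h2.le⟩) h1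
    rwa [h0] at this
  rintro τ ⟨h1, h2⟩
  rcases lt_trichotomy τ (π/2) with h | h | h
  · exact base τ ⟨h1, h⟩
  · subst h
    have := phi_strictmonox φ hφ hper hmin hode hodd h0 h0' hanti hpos
      (Set.mem_Icc.mpr ⟨le_refl 0, by linarith⟩)
      (Set.mem_Icc.mpr ⟨by linarith, le_refl _⟩) (by linarith)
    rwa [h0] at this
  · rw [← phisymx φ hφ hper hmin hode hodd h0 h0' hanti hpos τ]
    exact base (π - τ) ⟨by linarith, by linarith⟩

lemma gnonnegx : ∀ τ ∈ Set.Icc (0:ℝ) π, 0 ≤ gfun φ τ := by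
  intro τ hτ
  exact mul_nonneg (Real.sqrt_nonneg _) (hpos τ hτ)

lemma gposx : ∀ τ ∈ Set.Ioo (0:ℝ) π, 0 < gfun φ τ := by
  intro τ hτ
  have h := phi_posx φ hφ hper hmin hode hodd h0 h0' hanti hpos τ hτ
  exact mul_pos (Real.sqrt_pos.mpr (abs_pos.mpr h.ne')) h

lemma gsymx : ∀ s, gfun φ (π - s) = gfun φ s := by
  intro s; unfold gfun; rw [phisymx φ hφ hper hmin hode hodd h0 h0' hanti hpos]

lemma gantix : ∀ s, gfun φ (s + π) = -(gfun φ s) := by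
  intro s; unfold gfun; rw [hanti s, abs_neg]; ring

lemma g0x : gfun φ 0 = 0 := by unfold gfun; rw [h0]; simp

lemma hgdx : ∀ t, HasDerivAt (gfun φ) (gdfun φ t) t := by
  intro t
  have := (hasDerivAt_sqrtabs_mul (φ t)).comp t
    (hd1x φ hφ hper hmin hode hodd h0 h0' hanti hpos t)
  unfold gfun gdfun
  exact this

lemma gdsymx : ∀ s, gdfun φ (π - s) = -gdfun φ s := by
  intro s; unfold gdfun
  rw [phisymx φ hφ hper hmin hode hodd h0 h0' hanti hpos,
    dphi_symx φ hφ hper hmin hode hodd h0 h0' hanti hpos]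
  ring

lemma gd_nonnegx : ∀ τ ∈ Set.Icc (0:ℝ) (π/2), 0 ≤ gdfun φ τ := by
  intro τ hτ
  exact mul_nonneg (by positivity)
    (dphi_nonnegx φ hφ hper hmin hode hodd h0 h0' hanti hpos τ hτ)

lemma wronx : ∀ y x, 0 ≤ y → y ≤ x → x ≤ π/2 → deriv φ x * φ y ≤ φ x * deriv φ y := by
  have hπ := pi_pos
  have hd1 := hd1x φ hφ hper hmin hode hodd h0 h0' hanti hpos
  have hd2 := hd2x φ hφ hper hmin hode hodd h0 h0' hanti hpos
  have hode' := hode'x φ hφ hper hmin hode hodd h0 h0' hanti hpos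
  intro y x hy hyx hx
  set w : ℝ → ℝ := fun t => φ t * deriv φ y - deriv φ t * φ y with hwdef
  have hw : ∀ t, HasDerivAt w (deriv φ t * deriv φ y - deriv (deriv φ) t * φ y) t :=
    fun t => ((hd1 t).mul_const _).sub ((hd2 t).mul_const _)
  have hmono : MonotoneOn w (Set.Icc y x) := by
    apply monotoneOn_of_deriv_nonneg (convex_Icc _ _)
    · exact Continuous.continuousOn (by
        apply Continuous.sub
        · exact hφ.continuous.mul continuous_const
        · apply Continuous.mul _ continuous_const
          apply continuous_iff_continuousAt.mpr
          exact fun s => (hd2 s).differentiableAt.continuousAt)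
    · intro t ht
      exact ((hw t).differentiableAt).differentiableWithinAt
    · intro t ht
      rw [interior_Icc] at ht
      rw [(hw t).deriv, hode' t]
      have h1 : 0 ≤ deriv φ t := dphi_nonnegx φ hφ hper hmin hode hodd h0 h0' hanti hpos t
        ⟨by linarith [ht.1], by linarith [ht.2]⟩
      have h2 : 0 ≤ deriv φ y := dphi_nonnegx φ hφ hper hmin hode hodd h0 h0' hanti hpos y
        ⟨hy, by linarith⟩
      have h3 : 0 ≤ φ t := hpos t ⟨by linarith [ht.1], by linarith [ht.2, pi_gt_three]⟩
      have h4 : 0 ≤ φ y := hpos y ⟨hy, by linarith⟩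
      have h5 : 0 ≤ Real.sqrt |φ t| := Real.sqrt_nonneg _
      unfold gfun
      nlinarith [mul_nonneg h1 h2, mul_nonneg (mul_nonneg h5 h3) h4]
  have h1 : w y ≤ w x := hmono (Set.mem_Icc.mpr ⟨le_refl _, hyx⟩)
    (Set.mem_Icc.mpr ⟨hyx, le_refl _⟩) hyx
  have h2 : w y = 0 := by rw [hwdef]; ring
  rw [h2] at h1
  have h3 : 0 ≤ φ x * deriv φ y - deriv φ x * φ y := by simpa [hwdef] using h1
  linarith

lemma crossx : ∀ y x, 0 ≤ y → y ≤ x → x ≤ π/2 → gdfun φ x * gfun φ y ≤ gfun φ x * gdfun φ y := by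
  intro y x hy hyx hx
  have key := mul_le_mul_of_nonneg_left
    (wronx φ hφ hper hmin hode hodd h0 h0' hanti hpos y x hy hyx hx)
    (show (0:ℝ) ≤ (3/2) * Real.sqrt |φ x| * Real.sqrt |φ y| by positivity)
  unfold gdfun gfun
  nlinarith [key]

end phi

section phi2

variable (φ : ℝ → ℝ) (hφ : ContDiff ℝ 3 φ)
    (hper : Function.Periodic φ (2 * π))
    (hmin : ∀ p, 0 < p → Function.Periodic φ p → 2 * π ≤ p)
    (hode : ∀ τ, deriv (deriv φ) τ + |φ τ| ^ ((1:ℝ)/2) * φ τ = 0)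
    (hodd : ∀ τ, φ (-τ) = -φ τ)
    (h0 : φ 0 = 0) (h0' : 0 < deriv φ 0)
    (hanti : ∀ τ, φ (τ + π) = -φ τ)
    (hpos : ∀ τ ∈ Set.Icc (0:ℝ) π, 0 ≤ φ τ)

set_option linter.unusedSectionVars false
set_option linter.unusedVariables false

include hφ hper hmin hode hodd h0 h0' hanti hpos

lemma ptmono0x : ∀ (s c₁ c₂ : ℝ), 0 ≤ s → s ≤ c₁ → c₁ ≤ c₂ → c₂ ≤ π/2 →
    gfun φ (c₁ + s) * gfun φ (c₁ - s) ≤ gfun φ (c₂ + s) * gfun φ (c₂ - s) := by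
  have gnonneg := gnonnegx φ hφ hper hmin hode hodd h0 h0' hanti hpos
  have gd_nonneg := gd_nonnegx φ hφ hper hmin hode hodd h0 h0' hanti hpos
  have cross := crossx φ hφ hper hmin hode hodd h0 h0' hanti hpos
  have hgd := hgdx φ hφ hper hmin hode hodd h0 h0' hanti hpos
  have gcont := gcontx φ hφ hper hmin hode hodd h0 h0' hanti hpos
  have phisym := phisymx φ hφ hper hmin hode hodd h0 h0' hanti hpos
  have gdsym := gdsymx φ hφ hper hmin hode hodd h0 h0' hanti hpos
  intro s c₁ c₂ hs hsc hcc hc2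
  have hπ := pi_pos
  set m : ℝ → ℝ := fun c => gfun φ (c + s) * gfun φ (c - s) with hmdef
  have hm : ∀ c, HasDerivAt m (gdfun φ (c + s) * gfun φ (c - s)
      + gfun φ (c + s) * gdfun φ (c - s)) c := by
    intro c
    have hp : HasDerivAt (fun c : ℝ => gfun φ (c + s)) (gdfun φ (c + s)) c := by
      have := (hgd (c + s)).comp c ((hasDerivAt_id c).add_const s)
      simpa [Function.comp_def] using this
    have hq : HasDerivAt (fun c : ℝ => gfun φ (c - s)) (gdfun φ (c - s)) c := by
      have := (hgd (c - s)).comp c ((hasDerivAt_id c).sub_const s)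
      simpa [Function.comp_def] using this
    exact hp.mul hq
  have hmono : MonotoneOn m (Set.Icc s (π/2)) := by
    apply monotoneOn_of_deriv_nonneg (convex_Icc _ _)
    · exact Continuous.continuousOn
        ((gcont.comp (continuous_id.add continuous_const)).mul
          (gcont.comp (continuous_id.sub continuous_const)))
    · exact fun c _ => (hm c).differentiableAt.differentiableWithinAt
    · intro c hc
      rw [interior_Icc] at hc
      rw [(hm c).deriv]
      set x := c + s with hxdef
      set y := c - s with hydef
      have hy0 : 0 ≤ y := by rw [hydef]; linarith [hc.1]
      have hyx : y ≤ x := by rw [hydef, hxdef]; linarith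
      have hxpi : x < π := by rw [hxdef]; linarith [hc.2, hsc, hcc, hc2]
      have hy2 : y ≤ π/2 := by rw [hydef]; linarith [hc.2]
      rcases le_or_gt x (π/2) with hx2 | hx2
      · have h1 := gd_nonneg x ⟨by linarith, hx2⟩
        have h2 := gnonneg y ⟨hy0, by linarith⟩
        have h3 := gnonneg x ⟨by linarith, by linarith⟩
        have h4 := gd_nonneg y ⟨hy0, hy2⟩
        positivity
      · set x' := π - x with hx'def
        have hx'0 : 0 < x' := by rw [hx'def]; linarith
        have hx'2 : x' ≤ π/2 := by rw [hx'def]; linarith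
        have hyx' : y ≤ x' := by rw [hx'def, hydef, hxdef]; linarith [hc.2]
        have hgx : gfun φ x' = gfun φ x := by
          rw [hx'def]
          unfold gfun
          rw [phisym]
        have hgdx2 : gdfun φ x' = -gdfun φ x := by
          rw [hx'def]
          exact gdsym x
        have hcr := cross y x' hy0 hyx' hx'2
        rw [hgdx2, hgx] at hcr
        linarith
  have h1 := hmono (Set.mem_Icc.mpr ⟨hsc, by linarith⟩)
    (Set.mem_Icc.mpr ⟨by linarith, hc2⟩) hcc
  simpa [hmdef] using h1

lemma ptmonox : ∀ (s c₁ c₂ : ℝ), -c₁ ≤ s → s ≤ c₁ → c₁ ≤ c₂ → c₂ ≤ π/2 →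
    gfun φ (c₁ + s) * gfun φ (c₁ - s) ≤ gfun φ (c₂ + s) * gfun φ (c₂ - s) := by
  intro s c₁ c₂ hs1 hs2 hcc hc2
  rcases le_or_gt 0 s with h | h
  · exact ptmono0x φ hφ hper hmin hode hodd h0 h0' hanti hpos s c₁ c₂ h hs2 hcc hc2
  · have := ptmono0x φ hφ hper hmin hode hodd h0 h0' hanti hpos (-s) c₁ c₂
      (by linarith) (by linarith) hcc hc2
    rw [show c₁ + -s = c₁ - s by ring, show c₁ - -s = c₁ + s by ring,
      show c₂ + -s = c₂ - s by ring, show c₂ - -s = c₂ + s by ring] at this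
    linarith [this]

lemma Jintblex : ∀ (q a b : ℝ),
    IntervalIntegrable (fun s => gfun φ (q + s) * gfun φ (q - s)) MeasureTheory.volume a b := by
  have gcont := gcontx φ hφ hper hmin hode hodd h0 h0' hanti hpos
  intro q a b
  apply Continuous.intervalIntegrable
  exact (gcont.comp (continuous_const.add continuous_id)).mul
    (gcont.comp (continuous_const.sub continuous_id))

lemma Ieqx : ∀ q : ℝ,
    (-(∫ τ in (π - 2*q)..π, deriv (deriv φ) τ * deriv (deriv φ) (τ + 2*q))) = Jq φ q := by
  have ganti := gantix φ hφ hper hmin hode hodd h0 h0' hanti hpos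
  have gsym := gsymx φ hφ hper hmin hode hodd h0 h0' hanti hpos
  have hode' := hode'x φ hφ hper hmin hode hodd h0 h0' hanti hpos
  intro q
  have h1 : (∫ τ in (π - 2*q)..π, deriv (deriv φ) τ * deriv (deriv φ) (τ + 2*q))
      = ∫ τ in (π - 2*q)..π, -(gfun φ τ * gfun φ (τ + 2*q - π)) := by
    apply integral_congr
    intro τ _
    have h2 := ganti (τ + 2*q - π)
    rw [show τ + 2*q - π + π = τ + 2*q by ring] at h2
    dsimp only
    rw [hode' τ, hode' (τ + 2*q), h2]
    ring
  rw [h1, integral_neg, neg_neg]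
  have h3 := integral_comp_add_right (a := -q) (b := q)
    (f := fun τ => gfun φ τ * gfun φ (τ + 2*q - π)) (π - q)
  rw [show -q + (π - q) = π - 2*q by ring, show q + (π - q) = π by ring] at h3
  rw [← h3]
  apply integral_congr
  intro s _
  dsimp only
  have h4 : gfun φ (s + (π - q)) = gfun φ (q - s) := by
    rw [show s + (π - q) = π - (q - s) by ring]
    exact gsym _
  rw [h4, show s + (π - q) + 2*q - π = q + s by ring]
  ring

lemma Jsym2x : ∀ q : ℝ, Jq φ q = 2 * ∫ s in (0:ℝ)..q, gfun φ (q + s) * gfun φ (q - s) := by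
  have hint := Jintblex φ hφ hper hmin hode hodd h0 h0' hanti hpos
  intro q
  have hsplit := integral_add_adjacent_intervals (hint q (-q) 0) (hint q 0 q)
  have hneg : (∫ s in (-q)..(0:ℝ), gfun φ (q + s) * gfun φ (q - s))
      = ∫ s in (0:ℝ)..q, gfun φ (q + s) * gfun φ (q - s) := by
    have h5 := integral_comp_neg (a := (0:ℝ)) (b := q)
      (f := fun u => gfun φ (q + u) * gfun φ (q - u))
    rw [neg_zero] at h5
    rw [← h5]
    apply integral_congr
    intro s _
    dsimp only
    rw [show q + -s = q - s by ring, show q - -s = q + s by ring]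
    ring
  unfold Jq
  rw [← hsplit, hneg]
  ring

lemma Jcontx : Continuous (Jq φ) := by
  have gcont := gcontx φ hφ hper hmin hode hodd h0 h0' hanti hpos
  have : Jq φ = fun q => 2 * ∫ s in (0:ℝ)..q, gfun φ (q + s) * gfun φ (q - s) :=
    funext (Jsym2x φ hφ hper hmin hode hodd h0 h0' hanti hpos)
  rw [this]
  apply continuous_const.mul
  apply intervalIntegral.continuous_parametric_intervalIntegral_of_continuous
    (f := fun q s => gfun φ (q + s) * gfun φ (q - s)) _ continuous_id
  apply Continuous.mul
  · exact gcont.comp (continuous_fst.add continuous_snd)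
  · exact gcont.comp (continuous_fst.sub continuous_snd)

lemma Jmonox : StrictMonoOn (Jq φ) (Set.Icc (0:ℝ) (π/2)) := by
  have gnonneg := gnonnegx φ hφ hper hmin hode hodd h0 h0' hanti hpos
  have gpos := gposx φ hφ hper hmin hode hodd h0 h0' hanti hpos
  have Jintble := Jintblex φ hφ hper hmin hode hodd h0 h0' hanti hpos
  have ptmono := ptmonox φ hφ hper hmin hode hodd h0 h0' hanti hpos
  rintro c₁ ⟨hc10, hc12⟩ c₂ ⟨hc20, hc22⟩ hlt
  have hπ := pi_pos
  set F : ℝ → ℝ := fun s => gfun φ (c₂ + s) * gfun φ (c₂ - s) with hF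
  have hsplit1 := integral_add_adjacent_intervals (f := F)
    (Jintble c₂ (-c₂) (-c₁)) (Jintble c₂ (-c₁) c₂)
  have hsplit2 := integral_add_adjacent_intervals (f := F)
    (Jintble c₂ (-c₁) c₁) (Jintble c₂ c₁ c₂)
  have hT1 : 0 ≤ ∫ s in (-c₂)..(-c₁), F s := by
    apply integral_nonneg (by linarith)
    rintro u ⟨hu1, hu2⟩
    apply mul_nonneg
    · exact gnonneg _ ⟨by linarith, by linarith⟩
    · exact gnonneg _ ⟨by linarith, by linarith⟩
  have hT3 : 0 < ∫ s in c₁..c₂, F s := by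
    apply intervalIntegral_pos_of_pos_on (Jintble c₂ c₁ c₂) _ hlt
    rintro u ⟨hu1, hu2⟩
    apply mul_pos
    · exact gpos _ ⟨by linarith, by linarith⟩
    · exact gpos _ ⟨by linarith, by linarith⟩
  have hT2 : Jq φ c₁ ≤ ∫ s in (-c₁)..c₁, F s := by
    unfold Jq
    apply integral_mono_on (by linarith) (Jintble c₁ (-c₁) c₁) (Jintble c₂ (-c₁) c₁)
    rintro s ⟨hs1, hs2⟩
    exact ptmono s c₁ c₂ hs1 hs2 hlt.le hc22
  have hsum : Jq φ c₂ = (∫ s in (-c₂)..(-c₁), F s) + (∫ s in (-c₁)..c₁, F s)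
      + ∫ s in c₁..c₂, F s := by
    show (∫ s in (-c₂)..c₂, F s) = _
    rw [← hsplit1, ← hsplit2]
    ring
  linarith

lemma Jzerox : Jq φ 0 = 0 := by
  unfold Jq
  rw [neg_zero, integral_same]

lemma g_intx : ∫ t in (0:ℝ)..π, gfun φ t = 2 * deriv φ 0 := by
  have hode' := hode'x φ hφ hper hmin hode hodd h0 h0' hanti hpos
  have hd2 := hd2x φ hφ hper hmin hode hodd h0 h0' hanti hpos
  have hcont2 := hcont2x φ hφ hper hmin hode hodd h0 h0' hanti hpos
  have dphi_anti := dphi_antix φ hφ hper hmin hode hodd h0 h0' hanti hpos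
  have h1 : ∫ t in (0:ℝ)..π, gfun φ t = -∫ t in (0:ℝ)..π, deriv (deriv φ) t := by
    rw [← integral_neg]
    apply integral_congr
    intro t _
    dsimp only
    rw [hode' t, neg_neg]
  rw [h1, integral_deriv_eq_sub (fun x _ => (hd2 x).differentiableAt)
    (hcont2.intervalIntegrable _ _)]
  have h2 := dphi_anti 0
  rw [zero_add] at h2
  rw [h2]; ring

lemma Jendpointx : (2/π) * (deriv φ 0) ^ 2 < Jq φ (π/2) := by
  have gcont := gcontx φ hφ hper hmin hode hodd h0 h0' hanti hpos
  have gsym := gsymx φ hφ hper hmin hode hodd h0 h0' hanti hpos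
  have hπ := pi_pos
  have hJ : Jq φ (π/2) = ∫ t in (0:ℝ)..π, (gfun φ t)^2 := by
    unfold Jq
    have h3 := integral_comp_add_right (a := -(π/2)) (b := π/2)
      (f := fun t => (gfun φ t)^2) (π/2)
    rw [show -(π/2) + π/2 = 0 by ring, show π/2 + π/2 = π by ring] at h3
    rw [← h3]
    apply integral_congr
    intro s _
    dsimp only
    have h4 : gfun φ (π/2 - s) = gfun φ (π/2 + s) := by
      rw [show π/2 - s = π - (π/2 + s) by ring]
      exact gsym _
    rw [h4, show s + π/2 = π/2 + s by ring]
    ring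
  set k : ℝ := 2 * deriv φ 0 / π with hk
  have hkpos : 0 < k := by positivity
  have hg0 : gfun φ 0 = 0 := g0x φ hφ hper hmin hode hodd h0 h0' hanti hpos
  obtain ⟨δ, hδpos, hδ⟩ := Metric.continuous_iff.mp gcont 0 (k/2) (by positivity)
  set δ' := min δ π with hδ'
  have hδ'pos : 0 < δ' := lt_min hδpos hπ
  have hδ'le : δ' ≤ π := min_le_right _ _
  have hsq : ∀ a b : ℝ, IntervalIntegrable (fun t => (gfun φ t - k)^2) MeasureTheory.volume a b :=
    fun a b => ((gcont.sub continuous_const).pow 2).intervalIntegrable a b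
  have hpos1 : 0 < ∫ t in (0:ℝ)..δ', (gfun φ t - k)^2 := by
    apply intervalIntegral_pos_of_pos_on (hsq 0 δ') _ hδ'pos
    rintro t ⟨ht1, ht2⟩
    have : dist t 0 < δ := by
      rw [Real.dist_eq, sub_zero, abs_of_pos ht1]
      exact lt_of_lt_of_le ht2 (min_le_left _ _)
    have hlt := hδ t this
    rw [Real.dist_eq, hg0, sub_zero] at hlt
    have : gfun φ t - k ≠ 0 := by
      intro h
      have : gfun φ t = k := by linarith
      rw [this] at hlt
      rw [abs_of_pos hkpos] at hlt
      linarith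
    positivity
  have hpos2 : 0 ≤ ∫ t in δ'..π, (gfun φ t - k)^2 :=
    integral_nonneg hδ'le (fun u _ => sq_nonneg _)
  have hsplit := integral_add_adjacent_intervals (f := fun t => (gfun φ t - k)^2)
    (hsq 0 δ') (hsq δ' π)
  have hpos3 : 0 < ∫ t in (0:ℝ)..π, (gfun φ t - k)^2 := by
    rw [← hsplit]; linarith
  have hexp : (∫ t in (0:ℝ)..π, (gfun φ t - k)^2)
      = (∫ t in (0:ℝ)..π, (gfun φ t)^2) - 2*k*(∫ t in (0:ℝ)..π, gfun φ t) + (π - 0) * k^2 := by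
    have e1 : (∫ t in (0:ℝ)..π, (gfun φ t - k)^2)
        = ∫ t in (0:ℝ)..π, ((gfun φ t)^2 - 2*k*(gfun φ t) + k^2) := by
      apply integral_congr; intro t _; ring
    rw [e1]
    have i1 : IntervalIntegrable (fun t => (gfun φ t)^2) MeasureTheory.volume 0 π :=
      (gcont.pow 2).intervalIntegrable _ _
    have i2 : IntervalIntegrable (fun t => 2*k*(gfun φ t)) MeasureTheory.volume 0 π :=
      (continuous_const.mul gcont).intervalIntegrable _ _
    have i3 : IntervalIntegrable (fun _ : ℝ => k^2) MeasureTheory.volume 0 π :=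
      continuous_const.intervalIntegrable _ _
    rw [integral_add (i1.sub i2) i3, integral_sub i1 i2, integral_const,
      integral_const_mul, smul_eq_mul]
  rw [g_intx φ hφ hper hmin hode hodd h0 h0' hanti hpos] at hexp
  rw [hexp] at hpos3
  rw [hJ]
  have hk2 : k * π = 2 * deriv φ 0 := by rw [hk]; field_simp
  have hfin : (4/π) * (deriv φ 0)^2 < ∫ t in (0:ℝ)..π, (gfun φ t)^2 := by
    have hkk : (π - 0) * k^2 = (4/π) * (deriv φ 0)^2 := by
      field_simp [hk]; linear_combination (k*π + 2*deriv φ 0) * hk2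
    nlinarith [hpos3, hkk, hk2]
  have hhalf : (2/π) * (deriv φ 0)^2 < (4/π) * (deriv φ 0)^2 := by
    have h6 : (4/π) * (deriv φ 0)^2 = 2 * ((2/π) * (deriv φ 0)^2) := by ring
    have h7 : 0 < (2/π) * (deriv φ 0)^2 := by positivity
    linarith
  linarith

end phi2

/-- Existence and uniqueness of the critical wavenumber `q₀ ∈ (0, π/2)` at which
`I(q) = -∫_{π-2q}^{π} φ̈(τ)φ̈(τ+2q) dτ` crosses the threshold `(2/π)φ̇(0)²`
(Lemma 3 of the paper). -/
theorem critical_wavenumber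
    (φ : ℝ → ℝ) (hφ : ContDiff ℝ 3 φ)
    (hper : Function.Periodic φ (2 * π))
    (hmin : ∀ p, 0 < p → Function.Periodic φ p → 2 * π ≤ p)
    (hode : ∀ τ, deriv (deriv φ) τ + |φ τ| ^ ((1:ℝ)/2) * φ τ = 0)
    (hodd : ∀ τ, φ (-τ) = -φ τ)
    (h0 : φ 0 = 0) (h0' : 0 < deriv φ 0)
    (hanti : ∀ τ, φ (τ + π) = -φ τ)
    (hpos : ∀ τ ∈ Set.Icc (0:ℝ) π, 0 ≤ φ τ) :
    ∃! q₀ : ℝ, q₀ ∈ Set.Ioo (0:ℝ) (π/2) ∧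
      (-(∫ τ in (π - 2 * q₀)..π,
          deriv (deriv φ) τ * deriv (deriv φ) (τ + 2 * q₀)))
        = (2/π) * (deriv φ 0) ^ 2 ∧
      (∀ q ∈ Set.Ico (0:ℝ) q₀,
        (-(∫ τ in (π - 2 * q)..π,
            deriv (deriv φ) τ * deriv (deriv φ) (τ + 2 * q)))
          < (2/π) * (deriv φ 0) ^ 2) ∧
      (∀ q ∈ Set.Ioc q₀ (π/2),
        (2/π) * (deriv φ 0) ^ 2
          < -(∫ τ in (π - 2 * q)..π,
              deriv (deriv φ) τ * deriv (deriv φ) (τ + 2 * q))) := by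
  have hπ := pi_pos
  have hIeq := Ieqx φ hφ hper hmin hode hodd h0 h0' hanti hpos
  have hmono := Jmonox φ hφ hper hmin hode hodd h0 h0' hanti hpos
  have hcont := Jcontx φ hφ hper hmin hode hodd h0 h0' hanti hpos
  have hJ0 := Jzerox φ hφ hper hmin hode hodd h0 h0' hanti hpos
  have hJend := Jendpointx φ hφ hper hmin hode hodd h0 h0' hanti hpos
  set c0 : ℝ := (2/π) * (deriv φ 0) ^ 2 with hc0def
  have hc0pos : 0 < c0 := by positivity
  have hIVT := intermediate_value_Ioo (by linarith : (0:ℝ) ≤ π/2) hcont.continuousOn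
  have hmem : c0 ∈ Set.Ioo (Jq φ 0) (Jq φ (π/2)) := by
    rw [hJ0]; exact ⟨hc0pos, hJend⟩
  obtain ⟨q₀, hq₀mem, hq₀⟩ := hIVT hmem
  have hq₀Icc : q₀ ∈ Set.Icc (0:ℝ) (π/2) := ⟨hq₀mem.1.le, hq₀mem.2.le⟩
  refine ⟨q₀, ⟨hq₀mem, ?_, ?_, ?_⟩, ?_⟩
  · rw [hIeq q₀, hq₀]
  · rintro q ⟨hq1, hq2⟩
    rw [hIeq q, ← hq₀]
    exact hmono ⟨hq1, by linarith [hq₀mem.2]⟩ hq₀Icc hq2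
  · rintro q ⟨hq1, hq2⟩
    rw [hIeq q, ← hq₀]
    exact hmono hq₀Icc ⟨by linarith [hq₀mem.1], hq2⟩ hq1
  · rintro q₁ ⟨hmem1, heq1, _, _⟩
    by_contra hne
    have heq1' : Jq φ q₁ = c0 := by rw [← hIeq q₁]; exact heq1
    rcases lt_or_gt_of_ne hne with h | h
    · have := hmono ⟨hmem1.1.le, hmem1.2.le⟩ hq₀Icc h
      rw [heq1', hq₀] at this
      exact lt_irrefl _ this
    · have := hmono hq₀Icc ⟨hmem1.1.le, hmem1.2.le⟩ h
      rw [heq1', hq₀] at this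
      exact lt_irrefl _ this
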